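/- Fix a labeling of T_{3,∞} and ℓ ≥ 2. The set Q_{ℓ,∞} of σ ∈ Q̃_{ℓ,∞} for which the common value sgn_ℓ(σ,y)·sgn_{ℓ−1}(σ,y) equals +1 is a subgroup of Q̃_{ℓ,∞} of index exactly 2. -/

import Mathlib

/-!
Nodes of the infinite rooted `d`-ary tree `T_{d,∞}` are identified with their
labels, i.e. finite words over `Fin d`; the node below `s₁…s_m` is `s₁…s_{m-1}`.
A tree automorphism is a permutation of the nodes preserving levels (word
length) and the descendant relation (list prefix).
-/

namespace Arboreal

/-- The map induced by `σ` on the labels of the `d^n` nodes lying `n` levels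
above the node labeled `y` (junk value if the lengths do not work out, which
cannot happen for a tree automorphism). -/
noncomputable def localMap (d n : ℕ) (σ : Equiv.Perm (List (Fin d)))
    (y : List (Fin d)) (w : List.Vector (Fin d) n) : List.Vector (Fin d) n :=
  if h : ((σ (y ++ w.toList)).drop y.length).length = n then
    ⟨(σ (y ++ w.toList)).drop y.length, h⟩ else w

/-- `sgn d n σ y`: the sign of the permutation of the set `{0,…,d-1}^n` of
labels induced by `σ` on the nodes `n` levels above `y` (by convention `1`
if this map fails to be a bijection). -/
noncomputable def sgn (d n : ℕ) (σ : Equiv.Perm (List (Fin d)))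
    (y : List (Fin d)) : ℤˣ :=
  if h : Function.Bijective (localMap d n σ y) then
    Equiv.Perm.sign (Equiv.ofBijective _ h) else 1

/-- A permutation of the set of nodes of `T_{d,∞}` is a tree automorphism iff
it preserves levels and the descendant (prefix) relation. -/
def IsTreeAut (d : ℕ) (σ : Equiv.Perm (List (Fin d))) : Prop :=
  (∀ w, (σ w).length = w.length) ∧
    ∀ w₁ w₂ : List (Fin d), w₁ <+: w₂ → σ w₁ <+: σ w₂

variable {d n : ℕ} {σ τ : Equiv.Perm (List (Fin d))}

theorem IsTreeAut.one : IsTreeAut d 1 := ⟨fun _ => rfl, fun _ _ h => h⟩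

theorem IsTreeAut.mul (hσ : IsTreeAut d σ) (hτ : IsTreeAut d τ) : IsTreeAut d (σ * τ) :=
  ⟨fun w => by rw [Equiv.Perm.mul_apply, hσ.1, hτ.1],
   fun w₁ w₂ h => hσ.2 _ _ (hτ.2 _ _ h)⟩

theorem prefix_eq_of_length {l₁ l₂ l : List (Fin d)} (h₁ : l₁ <+: l) (h₂ : l₂ <+: l)
    (hl : l₁.length = l₂.length) : l₁ = l₂ := by
  rw [List.prefix_iff_eq_take.mp h₁, List.prefix_iff_eq_take.mp h₂, hl]

theorem IsTreeAut.inv (hσ : IsTreeAut d σ) : IsTreeAut d σ⁻¹ := by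
  have hlen : ∀ w, (σ⁻¹ w : List (Fin d)).length = w.length := by
    intro w
    conv_rhs => rw [← show σ (σ⁻¹ w) = w from Equiv.apply_symm_apply σ w]
    rw [hσ.1]
  refine ⟨hlen, fun w₁ w₂ h => ?_⟩
  have hle : (σ⁻¹ w₁ : List (Fin d)).length ≤ (σ⁻¹ w₂ : List (Fin d)).length := by
    rw [hlen, hlen]; exact h.length_le
  have htake : (σ⁻¹ w₂ : List (Fin d)).take (σ⁻¹ w₁ : List (Fin d)).length <+: σ⁻¹ w₂ :=
    List.take_prefix _ _
  have heq : (σ⁻¹ w₂ : List (Fin d)).take (σ⁻¹ w₁ : List (Fin d)).length = σ⁻¹ w₁ := by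
    apply σ.injective
    apply prefix_eq_of_length (hσ.2 _ _ htake)
    · simp only [show ∀ x, σ (σ⁻¹ x) = x from fun x => Equiv.apply_symm_apply σ x]; exact h
    · rw [hσ.1, hσ.1, List.length_take, hlen, hlen, min_eq_left]
      rw [hlen, hlen] at hle; exact hle
  rw [← heq]; exact htake

theorem IsTreeAut.apply_append (hσ : IsTreeAut d σ) (y : List (Fin d))
    (w : List.Vector (Fin d) n) :
    σ (y ++ w.toList) = σ y ++ (localMap d n σ y w).toList := by
  have hp : σ y <+: σ (y ++ w.toList) := hσ.2 _ _ (List.prefix_append y w.toList)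
  have hdrop : ((σ (y ++ w.toList)).drop y.length).length = n := by
    rw [List.length_drop, hσ.1, List.length_append, w.toList_length]
    omega
  simp only [localMap, hdrop, ↓reduceDIte]
  have ht := List.prefix_iff_eq_take.mp hp
  rw [hσ.1] at ht
  conv_lhs => rw [← List.take_append_drop y.length (σ (y ++ w.toList))]
  rw [← ht]
  rfl

theorem localMap_one (y : List (Fin d)) : localMap d n 1 y = id := by
  funext w
  have h : (((1 : Equiv.Perm (List (Fin d))) (y ++ w.toList)).drop y.length).length = n := by
    rw [Equiv.Perm.one_apply, List.drop_left, w.toList_length]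
  simp only [localMap, h, ↓reduceDIte]
  apply List.Vector.toList_injective
  simp [Equiv.Perm.one_apply, List.drop_left]

theorem localMap_mul (hσ : IsTreeAut d σ) (hτ : IsTreeAut d τ) (y : List (Fin d)) :
    localMap d n (σ * τ) y = localMap d n σ (τ y) ∘ localMap d n τ y := by
  funext w
  have h1 : (σ * τ) (y ++ w.toList)
      = σ (τ y) ++ (localMap d n σ (τ y) (localMap d n τ y w)).toList := by
    rw [Equiv.Perm.mul_apply, hτ.apply_append, hσ.apply_append]
  rw [(hσ.mul hτ).apply_append y w] at h1
  have hy : (σ * τ) y = σ (τ y) := rfl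
  rw [hy] at h1
  exact List.Vector.toList_injective (List.append_cancel_left h1)

theorem localMap_bijective (hσ : IsTreeAut d σ) (y : List (Fin d)) :
    Function.Bijective (localMap d n σ y) := by
  rw [Function.bijective_iff_has_inverse]
  refine ⟨localMap d n σ⁻¹ (σ y), ?_, ?_⟩
  · intro w
    have h := localMap_mul (n := n) hσ.inv hσ y
    rw [inv_mul_cancel, localMap_one] at h
    exact (congrFun h.symm w)
  · intro w
    have h := localMap_mul (n := n) hσ hσ.inv (σ y)
    rw [mul_inv_cancel, localMap_one, show ∀ x, σ⁻¹ (σ x) = x from fun x => Equiv.symm_apply_apply σ x] at h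
    exact (congrFun h.symm w)

theorem sgn_mul (hσ : IsTreeAut d σ) (hτ : IsTreeAut d τ) (y : List (Fin d)) :
    sgn d n (σ * τ) y = sgn d n σ (τ y) * sgn d n τ y := by
  have bστ := localMap_bijective (n := n) (hσ.mul hτ) y
  have bσ := localMap_bijective (n := n) hσ (τ y)
  have bτ := localMap_bijective (n := n) hτ y
  rw [sgn, sgn, sgn, dif_pos bστ, dif_pos bσ, dif_pos bτ]
  have : Equiv.ofBijective _ bστ = Equiv.ofBijective _ bσ * Equiv.ofBijective _ bτ := by
    ext w
    simp only [Equiv.ofBijective_apply, Equiv.Perm.mul_apply, localMap_mul hσ hτ y,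
      Function.comp_apply]
  rw [this, map_mul]

theorem sgn_one (y : List (Fin d)) : sgn d n 1 y = 1 := by
  have hb : Function.Bijective (localMap d n 1 y) := by
    rw [localMap_one]; exact Function.bijective_id
  rw [sgn, dif_pos hb]
  have : Equiv.ofBijective _ hb = (1 : Equiv.Perm (List.Vector (Fin d) n)) := by
    ext w
    simp [localMap_one]
  rw [this, map_one]

theorem sgn_inv (hσ : IsTreeAut d σ) (y : List (Fin d)) :
    sgn d n σ⁻¹ y = sgn d n σ (σ⁻¹ y) := by
  have h := sgn_mul (n := n) hσ hσ.inv y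
  rw [mul_inv_cancel, sgn_one] at h
  calc sgn d n σ⁻¹ y = (sgn d n σ (σ⁻¹ y) * sgn d n σ (σ⁻¹ y)) * sgn d n σ⁻¹ y := by
        rw [Int.units_mul_self, one_mul]
    _ = sgn d n σ (σ⁻¹ y) * (sgn d n σ (σ⁻¹ y) * sgn d n σ⁻¹ y) := by rw [mul_assoc]
    _ = sgn d n σ (σ⁻¹ y) := by rw [← h, mul_one]

theorem IsTreeAut.apply_nil (hσ : IsTreeAut d σ) : σ [] = [] :=
  List.length_eq_zero_iff.mp (hσ.1 [])


/-! ### The witness automorphism: apply the swap `(0 1)` to every letter -/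

def pi3 : Equiv.Perm (Fin 3) := Equiv.swap 0 1

theorem map_pi3_invol (l : List (Fin 3)) : (l.map pi3).map pi3 = l := by
  induction l with
  | nil => rfl
  | cons a t ih =>
    show pi3 (pi3 a) :: (t.map pi3).map pi3 = a :: t
    rw [ih, pi3, Equiv.swap_apply_self]

def mu : Equiv.Perm (List (Fin 3)) :=
  ⟨List.map pi3, List.map pi3, map_pi3_invol, map_pi3_invol⟩

theorem mu_apply (l : List (Fin 3)) : mu l = l.map pi3 := rfl

theorem isTreeAut_mu : IsTreeAut 3 mu := by
  refine ⟨fun w => List.length_map _, fun w₁ w₂ h => ?_⟩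
  obtain ⟨t, rfl⟩ := h
  exact ⟨t.map pi3, by rw [mu_apply, mu_apply, List.map_append]⟩

theorem vec_map_pi3_invol (v : List.Vector (Fin 3) n) :
    (v.map pi3).map pi3 = v := by
  apply List.Vector.toList_injective
  rw [List.Vector.toList_map, List.Vector.toList_map, map_pi3_invol]

def nu (n : ℕ) : Equiv.Perm (List.Vector (Fin 3) n) :=
  ⟨List.Vector.map pi3, List.Vector.map pi3, vec_map_pi3_invol, vec_map_pi3_invol⟩

def consEquiv (n : ℕ) : (Fin 3 × List.Vector (Fin 3) n) ≃ List.Vector (Fin 3) (n + 1) where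
  toFun p := p.1 ::ᵥ p.2
  invFun v := (v.head, v.tail)
  left_inv p := by simp
  right_inv v := by simp

theorem sign_nu (n : ℕ) : Equiv.Perm.sign (nu n) = (-1) ^ n := by
  induction n with
  | zero =>
    have : nu 0 = 1 := Equiv.ext fun v => Subsingleton.elim _ _
    rw [this, map_one, pow_zero]
  | succ n ih =>
    have key : nu (n + 1) = (consEquiv n).permCongr
        ((Equiv.prodCongrLeft fun _ => pi3) * (Equiv.prodCongrRight fun _ => nu n)) := by
      refine Equiv.ext fun v => ?_
      show List.Vector.map pi3 v = _
      conv_lhs => rw [← v.cons_head_tail]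
      rw [List.Vector.map_cons]
      rfl
    rw [key, Equiv.Perm.sign_permCongr, map_mul, Equiv.Perm.sign_prodCongrLeft,
      Equiv.Perm.sign_prodCongrRight]
    have h1 : ∏ _k : List.Vector (Fin 3) n, Equiv.Perm.sign pi3 = (-1 : ℤˣ) := by
      rw [Finset.prod_const, pi3, Equiv.Perm.sign_swap (by decide)]
      exact Odd.neg_one_pow ⟨(Fintype.card (List.Vector (Fin 3) n) - 1) / 2, by
        have : Fintype.card (List.Vector (Fin 3) n) = 3 ^ n := by
          simp [card_vector (α := Fin 3) n]
        rw [Finset.card_univ, this]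
        have hodd : Odd (3 ^ n) := Odd.pow (by decide)
        obtain ⟨k, hk⟩ := hodd
        omega⟩
    have h2 : ∏ _k : Fin 3, Equiv.Perm.sign (nu n) = (-1 : ℤˣ) ^ n := by
      rw [Finset.prod_const, ih, Finset.card_univ, Fintype.card_fin, ← pow_mul]
      rcases Nat.even_or_odd n with he | ho
      · rw [Even.neg_one_pow he, Even.neg_one_pow (he.mul_right 3)]
      · rw [Odd.neg_one_pow ho, Odd.neg_one_pow (ho.mul (by decide : Odd 3))]
    rw [h1, h2, pow_succ, mul_comm]

theorem localMap_mu (n : ℕ) (y : List (Fin 3)) (w : List.Vector (Fin 3) n) :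
    localMap 3 n mu y w = w.map pi3 := by
  have hd : (mu (y ++ w.toList)).drop y.length = w.toList.map pi3 := by
    rw [mu_apply, List.map_append, List.drop_left' (by rw [List.length_map])]
  have hc : ((mu (y ++ w.toList)).drop y.length).length = n := by
    rw [hd, List.length_map, w.toList_length]
  simp only [localMap, hc, ↓reduceDIte]
  apply List.Vector.toList_injective
  rw [List.Vector.toList_map]
  exact hd

theorem sgn_mu (n : ℕ) (y : List (Fin 3)) : sgn 3 n mu y = (-1) ^ n := by
  have hb : Function.Bijective (localMap 3 n mu y) := localMap_bijective isTreeAut_mu y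
  rw [sgn, dif_pos hb]
  have : Equiv.ofBijective _ hb = nu n := by
    ext w
    rw [Equiv.ofBijective_apply, localMap_mu]
    rfl
  rw [this, sign_nu]


/-- for a fixed labeling of `T_{3,∞}` and `ℓ ≥ 2`, the set
`Q_{ℓ,∞}` of elements of `Q̃_{ℓ,∞}` whose common value of
`sgn_ℓ(σ,y)·sgn_{ℓ-1}(σ,y)` is `+1` is a subgroup of `Q̃_{ℓ,∞}` of index
exactly `2`. -/
theorem Q_subgroup_index_two (ℓ : ℕ) (hℓ : 2 ≤ ℓ) :
    ∃ Htil H : Subgroup (Equiv.Perm (List (Fin 3))),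
      (Htil : Set (Equiv.Perm (List (Fin 3)))) =
        {σ | IsTreeAut 3 σ ∧ ∀ y : List (Fin 3),
          sgn 3 ℓ σ y * sgn 3 (ℓ - 1) σ y =
            sgn 3 ℓ σ [] * sgn 3 (ℓ - 1) σ []} ∧
      (H : Set (Equiv.Perm (List (Fin 3)))) =
        {σ | IsTreeAut 3 σ ∧ ∀ y : List (Fin 3),
          sgn 3 ℓ σ y * sgn 3 (ℓ - 1) σ y = 1} ∧
      H ≤ Htil ∧ H.relIndex Htil = 2 := by
  let pair : Equiv.Perm (List (Fin 3)) → List (Fin 3) → ℤˣ :=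
    fun σ y => sgn 3 ℓ σ y * sgn 3 (ℓ - 1) σ y
  have pair_mul : ∀ {σ τ}, IsTreeAut 3 σ → IsTreeAut 3 τ → ∀ y,
      pair (σ * τ) y = pair σ (τ y) * pair τ y := by
    intro σ τ hσ hτ y
    show sgn 3 ℓ (σ * τ) y * sgn 3 (ℓ - 1) (σ * τ) y = _
    rw [sgn_mul hσ hτ, sgn_mul hσ hτ]
    exact mul_mul_mul_comm _ _ _ _
  have pair_inv : ∀ {σ}, IsTreeAut 3 σ → ∀ y, pair σ⁻¹ y = pair σ (σ⁻¹ y) := by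
    intro σ hσ y
    show sgn 3 ℓ σ⁻¹ y * sgn 3 (ℓ - 1) σ⁻¹ y = _
    rw [sgn_inv hσ, sgn_inv hσ]
  have pair_one : ∀ y, pair 1 y = 1 := fun y => by
    show sgn 3 ℓ 1 y * sgn 3 (ℓ - 1) 1 y = 1
    rw [sgn_one, sgn_one, mul_one]
  let Htil : Subgroup (Equiv.Perm (List (Fin 3))) :=
  { carrier := {σ | IsTreeAut 3 σ ∧ ∀ y, pair σ y = pair σ []}
    mul_mem' := by
      rintro a b ⟨ha, hac⟩ ⟨hb, hbc⟩
      refine ⟨ha.mul hb, fun y => ?_⟩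
      rw [pair_mul ha hb, pair_mul ha hb, hb.apply_nil, hac, hbc, hac]
    one_mem' := ⟨IsTreeAut.one, fun y => by rw [pair_one, pair_one]⟩
    inv_mem' := by
      rintro a ⟨ha, hac⟩
      refine ⟨ha.inv, fun y => ?_⟩
      rw [pair_inv ha, pair_inv ha, hac (a⁻¹ y), hac (a⁻¹ [])] }
  let H : Subgroup (Equiv.Perm (List (Fin 3))) :=
  { carrier := {σ | IsTreeAut 3 σ ∧ ∀ y, pair σ y = 1}
    mul_mem' := by
      rintro a b ⟨ha, hac⟩ ⟨hb, hbc⟩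
      refine ⟨ha.mul hb, fun y => ?_⟩
      rw [pair_mul ha hb, hac, hbc, mul_one]
    one_mem' := ⟨IsTreeAut.one, pair_one⟩
    inv_mem' := by
      rintro a ⟨ha, hac⟩
      refine ⟨ha.inv, fun y => ?_⟩
      rw [pair_inv ha, hac] }
  have hle : H ≤ Htil := by
    rintro σ ⟨hσ, hc⟩
    exact ⟨hσ, fun y => by rw [hc y, hc []]⟩
  have hmem_til : ∀ a : Htil, IsTreeAut 3 (a : Equiv.Perm (List (Fin 3))) ∧
      ∀ y, pair a y = pair a [] := fun a => a.2
  let φ : Htil →* ℤˣ :=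
  { toFun := fun σ => pair σ.1 []
    map_one' := pair_one []
    map_mul' := by
      intro a b
      show pair (a.1 * b.1) [] = pair a.1 [] * pair b.1 []
      rw [pair_mul (hmem_til a).1 (hmem_til b).1, (hmem_til b).1.apply_nil] }
  have hker : H.subgroupOf Htil = φ.ker := by
    ext a
    rw [Subgroup.mem_subgroupOf, MonoidHom.mem_ker]
    constructor
    · rintro ⟨-, hc⟩
      exact hc []
    · intro h1
      exact ⟨(hmem_til a).1, fun y => by rw [(hmem_til a).2 y]; exact h1⟩
  have hmu : mu ∈ Htil := by
    refine ⟨isTreeAut_mu, fun y => ?_⟩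
    show sgn 3 ℓ mu y * sgn 3 (ℓ - 1) mu y = sgn 3 ℓ mu [] * sgn 3 (ℓ - 1) mu []
    rw [sgn_mu, sgn_mu, sgn_mu, sgn_mu]
  have hφmu : φ ⟨mu, hmu⟩ = -1 := by
    show sgn 3 ℓ mu [] * sgn 3 (ℓ - 1) mu [] = -1
    rw [sgn_mu, sgn_mu, ← pow_add]
    exact Odd.neg_one_pow ⟨ℓ - 1, by omega⟩
  have hsurj : Function.Surjective φ := by
    intro u
    rcases Int.units_eq_one_or u with rfl | rfl
    · exact ⟨1, map_one φ⟩
    · exact ⟨⟨mu, hmu⟩, hφmu⟩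
  refine ⟨Htil, H, rfl, rfl, hle, ?_⟩
  rw [Subgroup.relIndex, hker, Subgroup.index_ker, φ.range_eq_top_of_surjective hsurj,
    Subgroup.card_top, Nat.card_eq_fintype_card, Fintype.card_units_int]


end Arboreal
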